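/- Define τ := liminf_{m→∞} m^{2/3}·inf{ E(Y) : Y ⊆ Q, #Y = m }. Then for every n ≥ 1 and every minimizer Y_n of the quantization energy among subsets of Q with n points, one has n^{2/3}·E(Y_n) ≥ τ. -/

import Mathlib

open MeasureTheory

noncomputable section

/-- Euclidean 3-space. -/
abbrev E3 := EuclideanSpace ℝ (Fin 3)

/-- The closed unit cube Q = [0,1]³. -/
def Qcube : Set E3 := {x | ∀ i, x i ∈ Set.Icc (0 : ℝ) 1}

/-- The quantization energy E(Y) = ∫_Q dist(x,Y)² dx. -/
def quantE (Y : Finset E3) : ℝ := ∫ x in Qcube, (Metric.infDist x (↑Y : Set E3)) ^ 2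

/-- The Voronoi cell of a generator y ∈ Y, relative to Q. -/
def vorCell (Y : Finset E3) (y : E3) : Set E3 :=
  {x ∈ Qcube | ∀ z ∈ Y, dist x y ≤ dist x z}

/-- Y is a minimizer of the quantization energy among n-point subsets of Q. -/
def IsMinimizer (n : ℕ) (Y : Finset E3) : Prop :=
  (↑Y : Set E3) ⊆ Qcube ∧ Y.card = n ∧
    ∀ Z : Finset E3, (↑Z : Set E3) ⊆ Qcube → Z.card = n → quantE Y ≤ quantE Z

/-- ω₃ = 4π/3, the volume of the unit ball in ℝ³. -/
def omega3 : ℝ := 4 * Real.pi / 3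

/-- Γ₁ = (2/5)^{2/3} / 40. -/
def Gamma1 : ℝ := ((2 / 5 : ℝ) ^ ((2 : ℝ) / 3)) / 40

/-- Γ₃ = ω₃^{-1/5} Γ₁^{1/5}. -/
def Gamma3 : ℝ := omega3 ^ (-(1 : ℝ) / 5) * Gamma1 ^ ((1 : ℝ) / 5)

/-- Γ₅ = (1/4)(√(1 + 2⁴·3³/(5²·10³)) − 1) Γ₃. -/
def Gamma5 : ℝ :=
  (1 / 4) * (Real.sqrt (1 + (2 ^ 4 * 3 ^ 3 : ℝ) / (5 ^ 2 * 10 ^ 3)) - 1) * Gamma3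

/-- Γ₄, the diameter upper-bound constant. -/
def Gamma4 : ℝ :=
  (2 * (12 : ℝ) ^ ((1 : ℝ) / 4) * (16 : ℝ) ^ ((1 : ℝ) / 3) /
      (Real.pi ^ ((1 : ℝ) / 4) * omega3 ^ ((1 : ℝ) / 12))) *
    (Real.sqrt (1 + (2 ^ 4 * 3 ^ 3 : ℝ) / (5 ^ 2 * 10 ^ 3)) - 1) ^ (-(1 : ℝ) / 2) *
    ((5 ^ 2 * 10 ^ 3 : ℝ) / (2 ^ 2 * 3 ^ 3)) ^ ((1 : ℝ) / 4)

/-- τ = liminf_{m→∞} m^{2/3} · inf { E(Y) : Y ⊆ Q, #Y = m }. -/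
def tau : ℝ :=
  Filter.liminf
    (fun m : ℕ =>
      (m : ℝ) ^ ((2 : ℝ) / 3) *
        sInf {e : ℝ | ∃ Z : Finset E3, (↑Z : Set E3) ⊆ Qcube ∧ Z.card = m ∧ e = quantE Z})
    Filter.atTop

/-! ### Auxiliary lemmas -/

lemma qcube_isCompact : IsCompact Qcube := by
  apply Metric.isCompact_of_isClosed_isBounded
  · have : Qcube = ⋂ i, (fun x : E3 => x i) ⁻¹' Set.Icc (0:ℝ) 1 := by
      ext x; simp [Qcube]
    rw [this]
    exact isClosed_iInter fun i => (isClosed_Icc).preimage ((continuous_apply i).comp (PiLp.continuous_ofLp 2 _))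
  · apply (Metric.isBounded_closedBall (x := (0:E3)) (r := 2)).subset
    intro x hx
    simp only [Metric.mem_closedBall, dist_zero_right]
    rw [EuclideanSpace.norm_eq]
    have h3 : ∑ i, ‖x i‖^2 ≤ 3 := by
      have h1 : ∀ i : Fin 3, ‖x i‖^2 ≤ 1 := by
        intro i
        rw [Real.norm_eq_abs, sq_abs]
        nlinarith [(hx i).1, (hx i).2]
      calc ∑ i, ‖x i‖^2 ≤ ∑ _i : Fin 3, (1:ℝ) := Finset.sum_le_sum fun i _ => h1 i
        _ = 3 := by simp
    calc Real.sqrt (∑ i, ‖x i‖^2) ≤ Real.sqrt 4 := Real.sqrt_le_sqrt (by linarith)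
      _ = 2 := by rw [show (4:ℝ) = 2^2 by norm_num, Real.sqrt_sq (by norm_num)]

lemma qcube_measurableSet : MeasurableSet Qcube :=
  qcube_isCompact.isClosed.measurableSet

lemma quantE_nonneg (Y : Finset E3) : 0 ≤ quantE Y :=
  integral_nonneg fun x => pow_nonneg Metric.infDist_nonneg 2

/-- Finite union integral bound for nonnegative functions. -/
lemma setIntegral_biUnion_le {α ι : Type*} [MeasurableSpace α] {μ : Measure α}
    (F : Finset ι) (S : ι → Set α) (hS : ∀ i, MeasurableSet (S i)) (g : α → ℝ)
    (hg : ∀ x, 0 ≤ g x) (hint : ∀ i, IntegrableOn g (S i) μ) :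
    ∫ x in ⋃ i ∈ F, S i, g x ∂μ ≤ ∑ i ∈ F, ∫ x in S i, g x ∂μ := by
  classical
  induction F using Finset.induction with
  | empty => simp
  | @insert a F ha ih =>
    rw [Finset.set_biUnion_insert, Finset.sum_insert ha]
    set B : Set α := ⋃ i ∈ F, S i with hB
    have hBmeas : MeasurableSet B := F.measurableSet_biUnion (fun i _ => hS i)
    have hBint : IntegrableOn g B μ := (integrableOn_finset_iUnion).2 fun i _ => hint i
    have hsplit : S a ∪ B = S a ∪ (B \ S a) := by rw [Set.union_diff_self]
    rw [hsplit, setIntegral_union (Set.disjoint_sdiff_right) (hBmeas.diff (hS a)) (hint a)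
      (hBint.mono_set Set.diff_subset)]
    have h1 : ∫ x in B \ S a, g x ∂μ ≤ ∫ x in B, g x ∂μ :=
      setIntegral_mono_set hBint (Filter.Eventually.of_forall hg)
        (HasSubset.Subset.eventuallyLE Set.diff_subset)
    linarith [ih]

/-- The translation vector of the subcube indexed by v. -/
def cvec (k : ℕ) (v : Fin 3 → Fin k) : E3 := WithLp.toLp 2 (fun i => (v i : ℝ) / (k : ℝ))

/-- The affine contraction onto the subcube indexed by v. -/
def Tmap (k : ℕ) (v : Fin 3 → Fin k) (u : E3) : E3 := (k:ℝ)⁻¹ • u + cvec k v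

lemma Tmap_apply (k : ℕ) (v : Fin 3 → Fin k) (u : E3) (i : Fin 3) :
    Tmap k v u i = (k:ℝ)⁻¹ * u i + (v i : ℝ)/(k:ℝ) := by
  simp [Tmap, cvec, PiLp.add_apply, PiLp.smul_apply]

/-- Change of variables on a subcube. -/
lemma integral_Tmap_image (k : ℕ) (hk : 1 ≤ k) (v : Fin 3 → Fin k) (g : E3 → ℝ) :
    ∫ x in Tmap k v '' Qcube, g x
      = ∫ u in Qcube, ((k:ℝ)⁻¹)^3 * g (Tmap k v u) := by
  have hk0 : (0:ℝ) < (k:ℝ) := by exact_mod_cast hk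
  have hderiv : ∀ x ∈ Qcube, HasFDerivWithinAt (Tmap k v)
      (((k:ℝ)⁻¹) • (ContinuousLinearMap.id ℝ E3)) Qcube x := by
    intro x hx
    exact (((hasFDerivAt_id x).const_smul ((k:ℝ)⁻¹)).add_const (cvec k v)).hasFDerivWithinAt
  have hinj : Set.InjOn (Tmap k v) Qcube := by
    intro a _ b _ h
    simp only [Tmap, add_left_inj] at h
    exact smul_right_injective E3 (by positivity) h
  rw [integral_image_eq_integral_abs_det_fderiv_smul volume qcube_measurableSet hderiv hinj g]
  congr 1
  ext u
  have hdet : (((k:ℝ)⁻¹) • (ContinuousLinearMap.id ℝ E3)).det = ((k:ℝ)⁻¹)^3 := by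
    rw [ContinuousLinearMap.det]
    simp only [ContinuousLinearMap.coe_smul, ContinuousLinearMap.coe_id]
    rw [LinearMap.det_smul, LinearMap.det_id, finrank_euclideanSpace_fin]
    ring
  rw [hdet, smul_eq_mul, abs_of_nonneg (by positivity)]

lemma Tmap_continuous (k : ℕ) (v : Fin 3 → Fin k) : Continuous (Tmap k v) := by
  unfold Tmap
  fun_prop

lemma infDist_sq_continuous (S : Set E3) :
    Continuous (fun x : E3 => (Metric.infDist x S) ^ 2) :=
  (Metric.continuous_infDist_pt S).pow 2

/-- Q is covered by the k³ subcubes. -/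
lemma qcube_subset_iUnion (k : ℕ) (hk : 1 ≤ k) :
    Qcube ⊆ ⋃ v : Fin 3 → Fin k, Tmap k v '' Qcube := by
  intro x hx
  have hk0 : (0:ℝ) < (k:ℝ) := by exact_mod_cast hk
  -- choose v i = min ⌊k * x i⌋₊ (k-1)
  have hvlt : ∀ i, min (Nat.floor ((k:ℝ) * x i)) (k-1) < k := fun i =>
    lt_of_le_of_lt (min_le_right _ _) (by omega)
  set v : Fin 3 → Fin k := fun i => ⟨min (Nat.floor ((k:ℝ) * x i)) (k-1), hvlt i⟩ with hv
  set u : E3 := WithLp.toLp 2 (fun i => (k:ℝ) * x i - (v i : ℝ) : Fin 3 → ℝ) with hu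
  have hxi : ∀ i, 0 ≤ x i ∧ x i ≤ 1 := hx
  have huQ : u ∈ Qcube := by
    intro i
    have h0 : (0:ℝ) ≤ (k:ℝ) * x i := by nlinarith [(hxi i).1]
    have hfl : (Nat.floor ((k:ℝ) * x i) : ℝ) ≤ (k:ℝ) * x i := Nat.floor_le h0
    have hvval : (v i : ℝ) = min (Nat.floor ((k:ℝ) * x i)) (k-1) := rfl
    constructor
    · -- 0 ≤ u i
      show (0:ℝ) ≤ (k:ℝ) * x i - (v i : ℝ)
      have : (v i : ℝ) ≤ (Nat.floor ((k:ℝ) * x i) : ℝ) := by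
        rw [hvval]; exact_mod_cast min_le_left _ _
      linarith
    · -- u i ≤ 1
      show (k:ℝ) * x i - (v i : ℝ) ≤ 1
      rcases le_or_gt ((k:ℝ) * x i) ((k:ℝ) - 1) with h | h
      · -- then floor ≤ k-1 is not needed; floor case
        have h1 : (k:ℝ) * x i < Nat.floor ((k:ℝ) * x i) + 1 := Nat.lt_floor_add_one _
        have h2 : Nat.floor ((k:ℝ) * x i) ≤ k - 1 := by
          have : Nat.floor ((k:ℝ) * x i) < k := by
            rw [Nat.floor_lt h0]
            have hx1 : x i ≤ 1 := (hxi i).2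
            nlinarith
          omega
        have hvval2 : (v i : ℕ) = Nat.floor ((k:ℝ) * x i) := by
          simp only [hv]; exact min_eq_left h2
        have : (v i : ℝ) = (Nat.floor ((k:ℝ) * x i) : ℝ) := by exact_mod_cast hvval2
        linarith
      · -- k*x i > k-1: then v i = k-1 works since k x i ≤ k
        have hcast : ((k - 1 : ℕ) : ℝ) = (k:ℝ) - 1 := by
          push_cast [Nat.cast_sub hk]; ring
        have hfl2 : (k - 1 : ℕ) ≤ Nat.floor ((k:ℝ) * x i) := by
          apply Nat.le_floor
          rw [hcast]; linarith
        have hvval2 : (v i : ℕ) = k - 1 := by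
          simp only [hv]; exact min_eq_right hfl2
        have h2 : (v i : ℝ) ≥ (k:ℝ) - 1 := by
          have : (v i : ℝ) = ((k - 1 : ℕ) : ℝ) := by exact_mod_cast congrArg (Nat.cast : ℕ → ℝ) hvval2
          rw [this, hcast]
        have h3 : (k:ℝ) * x i ≤ k := by nlinarith [(hxi i).2]
        linarith
  refine Set.mem_iUnion.2 ⟨v, ⟨u, huQ, ?_⟩⟩
  ext i
  rw [Tmap_apply]
  show (k:ℝ)⁻¹ * ((k:ℝ) * x i - (v i : ℝ)) + (v i : ℝ)/(k:ℝ) = x i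
  field_simp
  ring

/-- Scaling lemma: from an n-point configuration, build a configuration with
between k³ and k³·n points whose energy is at most k⁻² times the original. -/
lemma exists_scaled_config (k : ℕ) (hk : 1 ≤ k) (Y : Finset E3)
    (hYQ : (↑Y : Set E3) ⊆ Qcube) (hYne : Y.Nonempty) :
    ∃ Z : Finset E3, (↑Z : Set E3) ⊆ Qcube ∧ k^3 ≤ Z.card ∧ Z.card ≤ k^3 * Y.card ∧
      quantE Z ≤ ((k:ℝ)⁻¹)^2 * quantE Y := by
  classical
  have hk0 : (0:ℝ) < (k:ℝ) := by exact_mod_cast hk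
  set Z : Finset E3 :=
    Finset.image (fun p : (Fin 3 → Fin k) × E3 => Tmap k p.1 p.2)
      ((Finset.univ : Finset (Fin 3 → Fin k)) ×ˢ Y) with hZdef
  have hmemZ : ∀ (v : Fin 3 → Fin k), ∀ y ∈ Y, Tmap k v y ∈ Z := by
    intro v y hy
    exact Finset.mem_image.2 ⟨(v, y), Finset.mem_product.2 ⟨Finset.mem_univ _, hy⟩, rfl⟩
  refine ⟨Z, ?_, ?_, ?_, ?_⟩
  · -- Z ⊆ Qcube
    intro x hx
    obtain ⟨⟨v, y⟩, hp, rfl⟩ := Finset.mem_image.1 hx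
    have hy : y ∈ Y := (Finset.mem_product.1 hp).2
    intro i
    rw [Tmap_apply]
    have hyi := hYQ hy i
    have hvk : ((v i : ℕ) : ℝ) ≤ (k:ℝ) - 1 := by
      have h2 : (v i : ℕ) + 1 ≤ k := (v i).isLt
      have h4 : ((v i : ℕ) : ℝ) + 1 ≤ (k:ℝ) := by exact_mod_cast h2
      linarith
    constructor
    · have := hyi.1
      positivity
    · have h1 : (k:ℝ)⁻¹ * y i ≤ (k:ℝ)⁻¹ := by
        nlinarith [hyi.2, inv_pos.2 hk0]
      have h2 : ((v i : ℕ) : ℝ)/(k:ℝ) ≤ ((k:ℝ) - 1)/(k:ℝ) := by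
        gcongr
      calc (k:ℝ)⁻¹ * y i + ((v i : ℕ) : ℝ)/(k:ℝ) ≤ (k:ℝ)⁻¹ + ((k:ℝ) - 1)/(k:ℝ) := by linarith
        _ = 1 := by field_simp; ring
  · -- k^3 ≤ Z.card
    obtain ⟨y₀, hy₀⟩ := hYne
    have hkne : (k:ℝ) ≠ 0 := ne_of_gt (by exact_mod_cast hk)
    have hinj : Set.InjOn (fun v : Fin 3 → Fin k => Tmap k v y₀) (Finset.univ : Finset (Fin 3 → Fin k)) := by
      intro v _ w _ h
      funext i
      have h1 := congrArg (fun z : E3 => z i) h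
      simp only [Tmap_apply] at h1
      have h2 : ((v i : ℕ) : ℝ)/(k:ℝ) = ((w i : ℕ) : ℝ)/(k:ℝ) := by linarith
      have h3 : ((v i : ℕ) : ℝ) = ((w i : ℕ) : ℝ) := by
        field_simp [hkne] at h2
        exact_mod_cast h2
      exact Fin.ext (by exact_mod_cast h3)
    have := Finset.card_le_card_of_injOn (fun v : Fin 3 → Fin k => Tmap k v y₀)
      (fun v _ => hmemZ v y₀ hy₀) hinj
    simpa [Fintype.card_fun] using this
  · -- Z.card ≤ k^3 * Y.card
    calc Z.card ≤ ((Finset.univ : Finset (Fin 3 → Fin k)) ×ˢ Y).card := Finset.card_image_le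
      _ = k^3 * Y.card := by simp [Finset.card_product, Fintype.card_fun]
  · -- energy bound
    set g : E3 → ℝ := fun x => (Metric.infDist x (↑Z : Set E3)) ^ 2 with hg
    have hgc : Continuous g := infDist_sq_continuous _
    have hgnn : ∀ x, 0 ≤ g x := fun x => pow_nonneg Metric.infDist_nonneg 2
    set S : (Fin 3 → Fin k) → Set E3 := fun v => Tmap k v '' Qcube with hS
    have hScomp : ∀ v, IsCompact (S v) := fun v => qcube_isCompact.image (Tmap_continuous k v)
    have hSmeas : ∀ v, MeasurableSet (S v) := fun v => (hScomp v).isClosed.measurableSet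
    have hSint : ∀ v, IntegrableOn g (S v) := fun v =>
      ContinuousOn.integrableOn_compact (hScomp v) hgc.continuousOn
    have hUcomp : IsCompact (⋃ v, S v) := isCompact_iUnion hScomp
    have step1 : quantE Z ≤ ∫ x in ⋃ v, S v, g x := by
      apply setIntegral_mono_set
        (ContinuousOn.integrableOn_compact hUcomp hgc.continuousOn)
        (Filter.Eventually.of_forall hgnn)
        (HasSubset.Subset.eventuallyLE (qcube_subset_iUnion k hk))
    have step2 : ∫ x in ⋃ v, S v, g x ≤ ∑ v : Fin 3 → Fin k, ∫ x in S v, g x := by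
      have hE : (⋃ v ∈ (Finset.univ : Finset (Fin 3 → Fin k)), S v) = ⋃ v, S v := by
        ext x; simp
      rw [← hE]
      exact setIntegral_biUnion_le Finset.univ S hSmeas g hgnn hSint
    have step3 : ∀ v, ∫ x in S v, g x ≤ ((k:ℝ)⁻¹)^5 * quantE Y := by
      intro v
      rw [hS, integral_Tmap_image k hk v g]
      have hpt : ∀ u : E3, ((k:ℝ)⁻¹)^3 * g (Tmap k v u)
          ≤ ((k:ℝ)⁻¹)^5 * (Metric.infDist u (↑Y : Set E3))^2 := by
        intro u
        have hd : Metric.infDist (Tmap k v u) (↑Z : Set E3)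
            ≤ (k:ℝ)⁻¹ * Metric.infDist u (↑Y : Set E3) := by
          obtain ⟨y, hyY, hy⟩ := Y.finite_toSet.isCompact.exists_infDist_eq_dist
            (by exact_mod_cast hYne) u
          calc Metric.infDist (Tmap k v u) (↑Z : Set E3) ≤ dist (Tmap k v u) (Tmap k v y) :=
                Metric.infDist_le_dist_of_mem (by exact_mod_cast hmemZ v y (by exact_mod_cast hyY))
            _ = (k:ℝ)⁻¹ * dist u y := by
                simp only [Tmap]
                rw [dist_add_right, dist_smul₀]
                simp [abs_of_nonneg (by positivity : (0:ℝ) ≤ (k:ℝ)⁻¹)]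
            _ = (k:ℝ)⁻¹ * Metric.infDist u (↑Y : Set E3) := by rw [hy]
        have h1 : g (Tmap k v u) ≤ ((k:ℝ)⁻¹ * Metric.infDist u (↑Y : Set E3))^2 := by
          rw [hg]
          exact pow_le_pow_left₀ Metric.infDist_nonneg hd 2
        nlinarith [pow_nonneg (inv_pos.2 hk0).le 3, h1]
      calc ∫ u in Qcube, ((k:ℝ)⁻¹)^3 * g (Tmap k v u)
          ≤ ∫ u in Qcube, ((k:ℝ)⁻¹)^5 * (Metric.infDist u (↑Y : Set E3))^2 := by
            apply setIntegral_mono ?_ ?_ hpt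
            · exact ContinuousOn.integrableOn_compact qcube_isCompact
                (((hgc.comp (Tmap_continuous k v)).const_smul (((k:ℝ)⁻¹)^3)).continuousOn)
            · exact ContinuousOn.integrableOn_compact qcube_isCompact
                (((infDist_sq_continuous _).const_smul (((k:ℝ)⁻¹)^5)).continuousOn)
        _ = ((k:ℝ)⁻¹)^5 * quantE Y := by
            rw [quantE, MeasureTheory.integral_const_mul]
    calc quantE Z ≤ ∑ v : Fin 3 → Fin k, ∫ x in S v, g x := le_trans step1 step2
      _ ≤ ∑ _v : Fin 3 → Fin k, ((k:ℝ)⁻¹)^5 * quantE Y := Finset.sum_le_sum fun v _ => step3 v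
      _ = ((k:ℝ)⁻¹)^2 * quantE Y := by
          rw [Finset.sum_const]
          simp only [Fintype.card_fun, Fintype.card_fin, Finset.card_univ, nsmul_eq_mul]
          push_cast
          field_simp

theorem stmt_7 (n : ℕ) (hn : 1 ≤ n) (Y : Finset E3) (hY : IsMinimizer n Y) :
    (n : ℝ) ^ ((2 : ℝ) / 3) * quantE Y ≥ tau := by
  obtain ⟨hYQ, hYcard, -⟩ := hY
  have hYne : Y.Nonempty := Finset.card_pos.1 (by rw [hYcard]; exact hn)
  set f : ℕ → ℝ := fun m =>
    (m : ℝ) ^ ((2 : ℝ) / 3) *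
      sInf {e : ℝ | ∃ Z : Finset E3, (↑Z : Set E3) ⊆ Qcube ∧ Z.card = m ∧ e = quantE Z} with hf
  have hSnn : ∀ m, ∀ e ∈ {e : ℝ | ∃ Z : Finset E3, (↑Z : Set E3) ⊆ Qcube ∧ Z.card = m ∧ e = quantE Z},
      0 ≤ e := by
    rintro m e ⟨Z, -, -, rfl⟩
    exact quantE_nonneg Z
  have hfnn : ∀ m, 0 ≤ f m := by
    intro m
    exact mul_nonneg (Real.rpow_nonneg (Nat.cast_nonneg m) _) (Real.sInf_nonneg (hSnn m))
  have hbdd : Filter.IsBoundedUnder (· ≥ ·) Filter.atTop f :=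
    Filter.isBoundedUnder_of ⟨0, fun m => hfnn m⟩
  have hfreq : ∃ᶠ m in Filter.atTop, f m ≤ (n : ℝ) ^ ((2 : ℝ) / 3) * quantE Y := by
    rw [Filter.frequently_atTop]
    intro N
    set k := max N 1 with hkdef
    have hk : 1 ≤ k := le_max_right N 1
    have hkN : N ≤ k := le_max_left N 1
    have hk0 : (0:ℝ) < (k:ℝ) := by exact_mod_cast hk
    obtain ⟨Z, hZQ, hZlo, hZhi, hZen⟩ := exists_scaled_config k hk Y hYQ hYne
    refine ⟨Z.card, ?_, ?_⟩
    · calc N ≤ k := hkN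
        _ ≤ k^3 := Nat.le_self_pow (by norm_num) k
        _ ≤ Z.card := hZlo
    · have hmem : quantE Z ∈ {e : ℝ | ∃ W : Finset E3, (↑W : Set E3) ⊆ Qcube ∧
          W.card = Z.card ∧ e = quantE W} := ⟨Z, hZQ, rfl, rfl⟩
      have hbddS : BddBelow {e : ℝ | ∃ W : Finset E3, (↑W : Set E3) ⊆ Qcube ∧
          W.card = Z.card ∧ e = quantE W} := ⟨0, fun e he => hSnn _ e he⟩
      have hsinf_le : sInf {e : ℝ | ∃ W : Finset E3, (↑W : Set E3) ⊆ Qcube ∧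
          W.card = Z.card ∧ e = quantE W} ≤ quantE Z := csInf_le hbddS hmem
      have hsinf_nn : 0 ≤ sInf {e : ℝ | ∃ W : Finset E3, (↑W : Set E3) ⊆ Qcube ∧
          W.card = Z.card ∧ e = quantE W} := Real.sInf_nonneg (hSnn _)
      have hcard : (Z.card : ℝ) ≤ ((k^3 * n : ℕ) : ℝ) := by
        exact_mod_cast (by rw [← hYcard]; exact hZhi : Z.card ≤ k^3 * n)
      have hEnn : 0 ≤ quantE Y := quantE_nonneg Y
      have h1 : f Z.card ≤ ((k^3 * n : ℕ) : ℝ) ^ ((2:ℝ)/3) * (((k:ℝ)⁻¹)^2 * quantE Y) := by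
        apply mul_le_mul
        · exact Real.rpow_le_rpow (Nat.cast_nonneg _) hcard (by norm_num)
        · exact le_trans hsinf_le hZen
        · exact hsinf_nn
        · positivity
      have h2 : ((k^3 * n : ℕ) : ℝ) ^ ((2:ℝ)/3) * (((k:ℝ)⁻¹)^2 * quantE Y)
          = (n : ℝ) ^ ((2 : ℝ) / 3) * quantE Y := by
        have hsplit : ((k^3 * n : ℕ) : ℝ) ^ ((2:ℝ)/3)
            = ((k:ℝ)^3) ^ ((2:ℝ)/3) * (n : ℝ) ^ ((2:ℝ)/3) := by
          push_cast
          exact Real.mul_rpow (by positivity) (Nat.cast_nonneg n)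
        have hpow : ((k:ℝ)^3) ^ ((2:ℝ)/3) = (k:ℝ)^2 := by
          rw [← Real.rpow_natCast (k:ℝ) 3, ← Real.rpow_mul (Nat.cast_nonneg k)]
          norm_num [Real.rpow_natCast]
        rw [hsplit, hpow]
        have hkne : (k:ℝ) ≠ 0 := ne_of_gt hk0
        field_simp
      rw [h2] at h1
      exact h1
  rw [ge_iff_le]
  unfold tau
  exact Filter.liminf_le_of_frequently_le hfreq hbdd
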